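/- Let λ₁, λ₂ be real numbers with λ₁ ≠ λ₂ and λ₁ ≠ 0. For h > 0 define e₁(h) = e^{λ₁h}, e₂(h) = e^{λ₂h}, a(h) = he₁λ₁² − λ₁λ₂(e₁ − e₂)/(λ₁ − λ₂), b(h) = 2he₁λ₁ + (λ₁ + λ₂)(e₂ − e₁)/(λ₁ − λ₂), T₁(h) = (b(h) − (e₁ − e₂))/(2a(h)) and T₂(h) = (b(h) + (e₁ − e₂))/(2a(h)). Then λ₁T₁(h) tends to 0 and λ₁T₂(h) tends to 1 as h tends to 0 from the right. -/

import Mathlib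

open Real Filter in
lemma ratio_tendsto_aux {f g : ℝ → ℝ} {a b : ℝ} (hf0 : f 0 = 0) (hg0 : g 0 = 0)
    (hf : HasDerivAt f a 0) (hg : HasDerivAt g b 0) (hb : b ≠ 0) :
    Tendsto (fun h => f h / g h) (nhdsWithin 0 (Set.Ioi 0)) (nhds (a / b)) := by
  have hf' := hasDerivAt_iff_tendsto_slope.mp hf
  have hg' := hasDerivAt_iff_tendsto_slope.mp hg
  have hd : Tendsto (fun h => slope f 0 h / slope g 0 h) (nhdsWithin 0 {(0:ℝ)}ᶜ) (nhds (a / b)) :=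
    hf'.div hg' hb
  have hmono : nhdsWithin (0:ℝ) (Set.Ioi 0) ≤ nhdsWithin 0 {(0:ℝ)}ᶜ :=
    nhdsWithin_mono _ (fun x hx => ne_of_gt hx)
  refine (hd.mono_left hmono).congr' ?_
  filter_upwards [self_mem_nhdsWithin] with h hh
  have hne : (h : ℝ) ≠ 0 := ne_of_gt hh
  simp only [slope_def_field, hf0, hg0, sub_zero]
  rcases eq_or_ne (g h) 0 with h0 | h0
  · simp [h0]
  · field_simp

open Real Filter in
/-- Proposition 1: For the two roots `T₁(h)`, `T₂(h)` of the quadratic (26),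
`λ₁T₁(h) → 0` and `λ₁T₂(h) → 1` as `h → 0⁺`. -/
theorem limits_of_quadratic_roots
    (l1 l2 : ℝ) (h12 : l1 ≠ l2) (h1 : l1 ≠ 0) :
    Tendsto (fun h : ℝ => l1 *
        (((2 * h * exp (l1 * h) * l1 + (l1 + l2) * (exp (l2 * h) - exp (l1 * h)) / (l1 - l2))
            - (exp (l1 * h) - exp (l2 * h))) /
          (2 * (h * exp (l1 * h) * l1 ^ 2 - l1 * l2 * (exp (l1 * h) - exp (l2 * h)) / (l1 - l2)))))
      (nhdsWithin 0 (Set.Ioi 0)) (nhds 0) ∧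
    Tendsto (fun h : ℝ => l1 *
        (((2 * h * exp (l1 * h) * l1 + (l1 + l2) * (exp (l2 * h) - exp (l1 * h)) / (l1 - l2))
            + (exp (l1 * h) - exp (l2 * h))) /
          (2 * (h * exp (l1 * h) * l1 ^ 2 - l1 * l2 * (exp (l1 * h) - exp (l2 * h)) / (l1 - l2)))))
      (nhdsWithin 0 (Set.Ioi 0)) (nhds 1) := by
  have hne : l1 - l2 ≠ 0 := sub_ne_zero.mpr h12
  have E1 : HasDerivAt (fun h : ℝ => exp (l1 * h)) l1 0 := by
    simpa using (((hasDerivAt_id (0:ℝ)).const_mul l1).exp)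
  have E2 : HasDerivAt (fun h : ℝ => exp (l2 * h)) l2 0 := by
    simpa using (((hasDerivAt_id (0:ℝ)).const_mul l2).exp)
  -- derivative of N₁ at 0 is 0
  have HN1 : HasDerivAt (fun h : ℝ => 2 * h * exp (l1 * h) * l1 +
      (l1 + l2) * (exp (l2 * h) - exp (l1 * h)) / (l1 - l2) - (exp (l1 * h) - exp (l2 * h)))
      0 0 := by
    have key := (((((hasDerivAt_id (0:ℝ)).const_mul 2).mul E1).mul_const l1).add
        (((E2.sub E1).const_mul (l1 + l2)).div_const (l1 - l2))).sub (E1.sub E2)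
    refine key.congr_deriv ?_
    simp only [id_eq, mul_zero, exp_zero, show (l1 + l2) * (l2 - l1) / (l1 - l2) = -(l1 + l2) by rw [div_eq_iff hne]; ring]
    ring
  -- derivative of N₂ at 0 is 2(l1-l2)
  have HN2 : HasDerivAt (fun h : ℝ => 2 * h * exp (l1 * h) * l1 +
      (l1 + l2) * (exp (l2 * h) - exp (l1 * h)) / (l1 - l2) + (exp (l1 * h) - exp (l2 * h)))
      (2 * (l1 - l2)) 0 := by
    have key := (((((hasDerivAt_id (0:ℝ)).const_mul 2).mul E1).mul_const l1).add
        (((E2.sub E1).const_mul (l1 + l2)).div_const (l1 - l2))).add (E1.sub E2)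
    refine key.congr_deriv ?_
    simp only [id_eq, mul_zero, exp_zero, show (l1 + l2) * (l2 - l1) / (l1 - l2) = -(l1 + l2) by rw [div_eq_iff hne]; ring]
    ring
  -- derivative of D at 0 is 2 l1 (l1-l2)
  have HD : HasDerivAt (fun h : ℝ => 2 * (h * exp (l1 * h) * l1 ^ 2 -
      l1 * l2 * (exp (l1 * h) - exp (l2 * h)) / (l1 - l2))) (2 * (l1 * (l1 - l2))) 0 := by
    have key := ((((hasDerivAt_id (0:ℝ)).mul E1).mul_const (l1 ^ 2)).sub
        (((E1.sub E2).const_mul (l1 * l2)).div_const (l1 - l2))).const_mul 2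
    refine key.congr_deriv ?_
    simp only [id_eq, mul_zero, exp_zero, show l1 * l2 * (l1 - l2) / (l1 - l2) = l1 * l2 by rw [div_eq_iff hne]]
    ring
  have hDne : 2 * (l1 * (l1 - l2)) ≠ 0 := by positivity
  have hN10 : (fun h : ℝ => 2 * h * exp (l1 * h) * l1 +
      (l1 + l2) * (exp (l2 * h) - exp (l1 * h)) / (l1 - l2) - (exp (l1 * h) - exp (l2 * h))) 0
      = 0 := by simp
  have hN20 : (fun h : ℝ => 2 * h * exp (l1 * h) * l1 +
      (l1 + l2) * (exp (l2 * h) - exp (l1 * h)) / (l1 - l2) + (exp (l1 * h) - exp (l2 * h))) 0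
      = 0 := by simp
  have hD0 : (fun h : ℝ => 2 * (h * exp (l1 * h) * l1 ^ 2 -
      l1 * l2 * (exp (l1 * h) - exp (l2 * h)) / (l1 - l2))) 0 = 0 := by simp
  constructor
  · have t1 := (ratio_tendsto_aux hN10 hD0 HN1 HD hDne).const_mul l1
    convert t1 using 2
    simp
  · have t2 := (ratio_tendsto_aux hN20 hD0 HN2 HD hDne).const_mul l1
    convert t2 using 2
    field_simp
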